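/- Fix a design matrix X ∈ ℝ^{n×d} and a location family y = μ + Z, Z ~ P₀ with mean zero. For a model M ⊆ [d] define the projection parameter θ_M = X_M⁺ μ and its estimate θ̂_M = X_M⁺ y. Let M̂(y) be any model selection rule, let q^β(V) be the 1−β quantile of sup_{v∈V}|v^⊤Z|, let s_ν = 2 q^ν({X_j}_{j=1}^d), let M̂⁺_ν = {M̂(y') : ‖X^⊤y − X^⊤y'‖_∞ ≤ s_ν}, and let V̂⁺_ν = {e_{j·M}^⊤ X_M⁺ / σ̂_{j·M} : M ∈ M̂⁺_ν, j ∈ M} with σ̂_{j·M} = sqrt(e_{j·M}^⊤ (X_M^⊤X_M)^{−1} e_{j·M}). Then for 0 < ν < α < 1, P_μ{θ_{j·M̂} ∈ (θ̂_{j·M̂} ± q^{(α−ν)}(V̂⁺_ν) σ̂_{j·M̂}) for all j ∈ M̂} ≥ 1 − α. -/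

import Mathlib

open MeasureTheory Matrix Set

/-- Submatrix of columns of `X` indexed by a model `M`. -/
def colSub {n d : ℕ} (X : Matrix (Fin n) (Fin d) ℝ) (M : Finset (Fin d)) :
    Matrix (Fin n) {j // j ∈ M} ℝ := fun i j => X i j.val

/-- Pseudoinverse `(X_Mᵀ X_M)⁻¹ X_Mᵀ` of the full-column-rank submatrix `X_M`. -/
noncomputable def pinvSub {n d : ℕ} (X : Matrix (Fin n) (Fin d) ℝ) (M : Finset (Fin d)) :
    Matrix {j // j ∈ M} (Fin n) ℝ :=
  ((colSub X M)ᵀ * colSub X M)⁻¹ * (colSub X M)ᵀ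

/-- Standard error scale `σ̂_{j·M} = sqrt(e_{j·M}ᵀ (X_Mᵀ X_M)⁻¹ e_{j·M})`. -/
noncomputable def sigmaHat {n d : ℕ} (X : Matrix (Fin n) (Fin d) ℝ) (M : Finset (Fin d))
    (j : {j // j ∈ M}) : ℝ :=
  Real.sqrt ((((colSub X M)ᵀ * colSub X M)⁻¹) j j)

namespace PosiAux

variable {n : ℕ}

/-- The event that all statistics `|v ⬝ᵥ z|`, `v ∈ V`, are at most `t`. -/
def Ev (V : Set (Fin n → ℝ)) (t : ℝ) : Set (Fin n → ℝ) := {z | ∀ v ∈ V, |v ⬝ᵥ z| ≤ t}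

lemma Ev_mono {V : Set (Fin n → ℝ)} {s t : ℝ} (h : s ≤ t) : Ev V s ⊆ Ev V t :=
  fun z hz v hv => (hz v hv).trans h

lemma Ev_anti {V W : Set (Fin n → ℝ)} (h : V ⊆ W) (t : ℝ) : Ev W t ⊆ Ev V t :=
  fun z hz v hv => hz v (h hv)

lemma measurable_dot (v : Fin n → ℝ) : Measurable fun z : Fin n → ℝ => v ⬝ᵥ z := by
  unfold dotProduct
  exact Finset.measurable_sum _ fun i _ => measurable_const.mul (measurable_pi_apply i)

lemma Ev_measurable {V : Set (Fin n → ℝ)} (hV : V.Finite) (t : ℝ) :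
    MeasurableSet (Ev V t) := by
  have hE : Ev V t = ⋂ v ∈ V, {z : Fin n → ℝ | |v ⬝ᵥ z| ≤ t} := by
    ext z; simp [Ev]
  rw [hE]
  exact MeasurableSet.biInter hV.countable fun v _ =>
    measurableSet_le (measurable_dot v).abs measurable_const

/-- The quantile defining set. -/
def qSet (P0 : Measure (Fin n → ℝ)) (V : Set (Fin n → ℝ)) (β : ℝ) : Set ℝ :=
  {t : ℝ | ENNReal.ofReal (1 - β) ≤ P0 (Ev V t)}

lemma qSet_nonempty (P0 : Measure (Fin n → ℝ)) [IsProbabilityMeasure P0]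
    {V : Set (Fin n → ℝ)} (hV : V.Finite) {β : ℝ} (hβ : 0 < β) :
    (qSet P0 V β).Nonempty := by
  have hmono : Monotone fun k : ℕ => Ev V (k : ℝ) := fun a b hab =>
    Ev_mono (by exact_mod_cast hab)
  have hU : ⋃ k : ℕ, Ev V (k : ℝ) = univ := by
    ext z
    simp only [mem_iUnion, mem_univ, iff_true]
    have hfin : ((fun v => |v ⬝ᵥ z|) '' V).Finite := hV.image _
    obtain ⟨c, hc⟩ := hfin.bddAbove
    obtain ⟨k, hk⟩ := exists_nat_ge c
    exact ⟨k, fun v hv => le_trans (hc ⟨v, hv, rfl⟩) hk⟩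
  have h1 : (1 : ENNReal) = ⨆ k : ℕ, P0 (Ev V (k : ℝ)) := by
    rw [← hmono.measure_iUnion, hU, measure_univ]
  have hlt : ENNReal.ofReal (1 - β) < ⨆ k : ℕ, P0 (Ev V (k : ℝ)) := by
    rw [← h1]
    exact ENNReal.ofReal_lt_one.2 (by linarith)
  obtain ⟨k, hk⟩ := lt_iSup_iff.mp hlt
  exact ⟨k, hk.le⟩

lemma qSet_subset_Ici (P0 : Measure (Fin n → ℝ)) [IsProbabilityMeasure P0]
    {V : Set (Fin n → ℝ)} (hVne : V.Nonempty) {β : ℝ} (hβ1 : β < 1) :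
    qSet P0 V β ⊆ Ici (0 : ℝ) := by
  intro t ht
  by_contra hlt
  simp only [mem_Ici, not_le] at hlt
  have hE : Ev V t = ∅ := by
    ext z
    simp only [Ev, mem_setOf_eq, mem_empty_iff_false, iff_false, not_forall]
    obtain ⟨v, hv⟩ := hVne
    exact ⟨v, hv, not_le.mpr (lt_of_lt_of_le hlt (abs_nonneg _))⟩
  have h := ht
  rw [qSet, mem_setOf_eq, hE, measure_empty] at h
  have h0 : (0:ℝ) < 1 - β := by linarith
  exact (ENNReal.ofReal_pos.2 h0).ne' (nonpos_iff_eq_zero.mp h)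

lemma Ev_empty (t : ℝ) : Ev (∅ : Set (Fin n → ℝ)) t = univ := by
  ext z; simp [Ev]

lemma qSet_empty_eq_univ (P0 : Measure (Fin n → ℝ)) [IsProbabilityMeasure P0]
    {β : ℝ} (hβ : 0 < β) : qSet P0 (∅ : Set (Fin n → ℝ)) β = univ := by
  ext t
  simp only [qSet, mem_setOf_eq, mem_univ, iff_true, Ev_empty, measure_univ]
  exact ENNReal.ofReal_le_one.mpr (by linarith)

lemma sInf_univ_real : sInf (univ : Set ℝ) = 0 := by
  rw [csInf_of_not_bddBelow, Real.sInf_empty]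
  rintro ⟨c, hc⟩
  have := hc (mem_univ (c - 1))
  linarith

lemma q_nonneg (P0 : Measure (Fin n → ℝ)) [IsProbabilityMeasure P0]
    (V : Set (Fin n → ℝ)) {β : ℝ} (hβ0 : 0 < β) (hβ1 : β < 1) :
    0 ≤ sInf (qSet P0 V β) := by
  rcases V.eq_empty_or_nonempty with h | h
  · rw [h, qSet_empty_eq_univ P0 hβ0, sInf_univ_real]
  · exact Real.sInf_nonneg fun x hx => qSet_subset_Ici P0 h hβ1 hx

lemma q_attained (P0 : Measure (Fin n → ℝ)) [IsProbabilityMeasure P0]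
    {V : Set (Fin n → ℝ)} (hV : V.Finite) {β : ℝ} (hβ0 : 0 < β) (hβ1 : β < 1) :
    ENNReal.ofReal (1 - β) ≤ P0 (Ev V (sInf (qSet P0 V β))) := by
  rcases V.eq_empty_or_nonempty with h | hne
  · rw [h, Ev_empty, measure_univ]
    exact ENNReal.ofReal_le_one.mpr (by linarith)
  have hSne : (qSet P0 V β).Nonempty := qSet_nonempty P0 hV hβ0
  have hSbdd : BddBelow (qSet P0 V β) := ⟨0, fun x hx => qSet_subset_Ici P0 hne hβ1 hx⟩
  set t₀ := sInf (qSet P0 V β) with ht₀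
  have hEq : Ev V t₀ = ⋂ k : ℕ, Ev V (t₀ + 1 / (k + 1)) := by
    apply Subset.antisymm
    · refine subset_iInter fun k => Ev_mono ?_
      have : (0:ℝ) < 1 / ((k:ℝ) + 1) := by positivity
      linarith
    · intro z hz v hv
      refine le_of_forall_pos_le_add fun ε hε => ?_
      obtain ⟨k, hk⟩ := exists_nat_one_div_lt hε
      have := (mem_iInter.mp hz k) v hv
      calc |v ⬝ᵥ z| ≤ t₀ + 1 / (k + 1) := this
        _ ≤ t₀ + ε := by push_cast; linarith
  have hanti : Antitone fun k : ℕ => Ev V (t₀ + 1 / (k + 1 : ℝ)) := by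
    intro a b hab
    apply Ev_mono
    have : (1 : ℝ) / (b + 1) ≤ 1 / (a + 1) := by
      apply one_div_le_one_div_of_le (by positivity)
      exact_mod_cast by omega
    linarith
  have hmeas : ∀ k : ℕ, NullMeasurableSet (Ev V (t₀ + 1 / (k + 1 : ℝ))) P0 :=
    fun k => (Ev_measurable hV _).nullMeasurableSet
  have hiInf := hanti.measure_iInter hmeas ⟨0, measure_ne_top _ _⟩
  rw [hEq, hiInf]
  refine le_iInf fun k => ?_
  have hmem : t₀ + 1 / (k + 1 : ℝ) ∈ qSet P0 V β := by
    obtain ⟨s, hs, hslt⟩ := (csInf_lt_iff hSbdd hSne).mp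
      (show t₀ < t₀ + 1 / (k + 1 : ℝ) by
        have : (0:ℝ) < 1 / (k + 1 : ℝ) := by positivity
        linarith)
    exact le_trans hs (measure_mono (Ev_mono hslt.le))
  exact hmem

lemma q_mono (P0 : Measure (Fin n → ℝ)) [IsProbabilityMeasure P0]
    {V W : Set (Fin n → ℝ)} (hVW : V ⊆ W) (hW : W.Finite) {β : ℝ}
    (hβ0 : 0 < β) (hβ1 : β < 1) :
    sInf (qSet P0 V β) ≤ sInf (qSet P0 W β) := by
  rcases V.eq_empty_or_nonempty with h | hne
  · rw [h, qSet_empty_eq_univ P0 hβ0, sInf_univ_real]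
    exact q_nonneg P0 W hβ0 hβ1
  · refine csInf_le_csInf ⟨0, fun x hx => qSet_subset_Ici P0 hne hβ1 hx⟩
      (qSet_nonempty P0 hW hβ0) ?_
    intro t ht
    exact le_trans ht (measure_mono (Ev_anti hVW t))

end PosiAux

open PosiAux in
lemma gram_posDef {n d : ℕ} (X : Matrix (Fin n) (Fin d) ℝ) (M : Finset (Fin d))
    (hdet : IsUnit ((colSub X M)ᵀ * colSub X M).det) :
    ((colSub X M)ᵀ * colSub X M).PosDef := by
  classical
  set A := colSub X M with hA
  have hpsd : (Aᴴ * A).PosSemidef := posSemidef_conjTranspose_mul_self A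
  rw [conjTranspose_eq_transpose_of_trivial] at hpsd
  refine posDef_iff_dotProduct_mulVec.mpr ⟨hpsd.1, fun x hx => lt_of_le_of_ne (hpsd.dotProduct_mulVec_nonneg x) fun h0 => hx ?_⟩
  have hstar : star x = x := funext fun i => star_trivial _
  rw [hstar, ← mulVec_mulVec, dotProduct_mulVec, vecMul_transpose] at h0
  have hAx : A *ᵥ x = 0 := dotProduct_self_eq_zero.mp h0.symm
  have hGx : (Aᵀ * A) *ᵥ x = 0 := by rw [← mulVec_mulVec, hAx, mulVec_zero]
  calc x = 1 *ᵥ x := (one_mulVec x).symm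
    _ = ((Aᵀ * A)⁻¹ * (Aᵀ * A)) *ᵥ x := by rw [nonsing_inv_mul _ hdet]
    _ = (Aᵀ * A)⁻¹ *ᵥ ((Aᵀ * A) *ᵥ x) := by rw [mulVec_mulVec]
    _ = 0 := by rw [hGx, mulVec_zero]

lemma sigmaHat_pos {n d : ℕ} (X : Matrix (Fin n) (Fin d) ℝ) (M : Finset (Fin d))
    (hdet : IsUnit ((colSub X M)ᵀ * colSub X M).det) (j : {j // j ∈ M}) :
    0 < sigmaHat X M j := by
  classical
  have hpd := (gram_posDef X M hdet).inv
  have hx : (Pi.single j (1:ℝ) : {j // j ∈ M} → ℝ) ≠ 0 := by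
    intro h
    have := congr_fun h j
    simp at this
  have hlt := hpd.dotProduct_mulVec_pos hx
  have hstar : star (Pi.single j (1:ℝ) : {j // j ∈ M} → ℝ) = Pi.single j 1 :=
    funext fun i => star_trivial _
  simp only [hstar, single_dotProduct, one_mul, mulVec_single_one, col_apply, mul_one] at hlt
  exact Real.sqrt_pos.2 hlt

/-- Locally simultaneous post-selection inference for projection parameters in
linear regression (Corollary on inference after model selection). -/
theorem posi_locally_simultaneous
    {n d : ℕ} (X : Matrix (Fin n) (Fin d) ℝ)
    (hrank : ∀ M : Finset (Fin d), IsUnit ((colSub X M)ᵀ * colSub X M).det)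
    (P0 : Measure (Fin n → ℝ)) [IsProbabilityMeasure P0]
    (hmean : ∀ i, ∫ z, z i ∂P0 = 0)
    (Mhat : (Fin n → ℝ) → Finset (Fin d))
    (q : ℝ → Set (Fin n → ℝ) → ℝ)
    (hq : ∀ β V, q β V =
      sInf {t : ℝ | ENNReal.ofReal (1 - β) ≤ P0 {z | ∀ v ∈ V, |v ⬝ᵥ z| ≤ t}})
    (μ : Fin n → ℝ) (α ν : ℝ) (hν : 0 < ν) (hνα : ν < α) (hα : α < 1)
    (sν : ℝ) (hsν : sν = 2 * q ν {v | ∃ j : Fin d, v = fun i => X i j})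
    (Mplus : (Fin n → ℝ) → Set (Finset (Fin d)))
    (hMplus : ∀ y, Mplus y = {M | ∃ y', ‖Xᵀ *ᵥ y - Xᵀ *ᵥ y'‖ ≤ sν ∧ M = Mhat y'})
    (Vplus : (Fin n → ℝ) → Set (Fin n → ℝ))
    (hVplus : ∀ y, Vplus y = {v | ∃ M ∈ Mplus y, ∃ j : {j // j ∈ M},
      v = fun i => pinvSub X M j i / sigmaHat X M j}) :
    ENNReal.ofReal (1 - α) ≤ P0 {z | ∀ j : {j // j ∈ Mhat (μ + z)},
      |(pinvSub X (Mhat (μ + z)) *ᵥ (μ + z)) j - (pinvSub X (Mhat (μ + z)) *ᵥ μ) j| ≤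
        q (α - ν) (Vplus (μ + z)) * sigmaHat X (Mhat (μ + z)) j} := by
  classical
  set VX : Set (Fin n → ℝ) := {v | ∃ j : Fin d, v = fun i => X i j} with hVXdef
  have hVXfin : VX.Finite := by
    refine (Set.finite_range (fun j : Fin d => (fun i => X i j : Fin n → ℝ))).subset ?_
    rintro v ⟨j, rfl⟩
    exact ⟨j, rfl⟩
  have hq' : ∀ β V, q β V = sInf (PosiAux.qSet P0 V β) := hq
  have hν1 : ν < 1 := lt_trans hνα hα
  have hqν0 : 0 ≤ q ν VX := by
    rw [hq']
    exact PosiAux.q_nonneg P0 VX hν hν1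
  set A : Set (Fin n → ℝ) := PosiAux.Ev VX (q ν VX) with hAdef
  have hPA : ENNReal.ofReal (1 - ν) ≤ P0 A := by
    rw [hAdef, hq']
    exact PosiAux.q_attained P0 hVXfin hν hν1
  set Mor : Set (Finset (Fin d)) :=
    {M | ∃ y', ‖Xᵀ *ᵥ μ - Xᵀ *ᵥ y'‖ ≤ q ν VX ∧ M = Mhat y'} with hMor
  set Vor : Set (Fin n → ℝ) := {v | ∃ M ∈ Mor, ∃ j : {j // j ∈ M},
      v = fun i => pinvSub X M j i / sigmaHat X M j} with hVor
  set U : Set (Fin n → ℝ) := ⋃ M : Finset (Fin d),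
      Set.range (fun j : {j // j ∈ M} => (fun i => pinvSub X M j i / sigmaHat X M j : Fin n → ℝ))
    with hUdef
  have hUfin : U.Finite := Set.finite_iUnion fun M => Set.finite_range _
  have hVorfin : Vor.Finite := by
    refine hUfin.subset ?_
    rintro v ⟨M, _, j, rfl⟩
    exact mem_iUnion.2 ⟨M, ⟨j, rfl⟩⟩
  have hβ0 : 0 < α - ν := by linarith
  have hβ1 : α - ν < 1 := by linarith
  set B : Set (Fin n → ℝ) := PosiAux.Ev Vor (q (α - ν) Vor) with hBdef
  have hPB : ENNReal.ofReal (1 - (α - ν)) ≤ P0 B := by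
    rw [hBdef, hq']
    exact PosiAux.q_attained P0 hVorfin hβ0 hβ1
  -- probability arithmetic
  have hAmeas : MeasurableSet A := PosiAux.Ev_measurable hVXfin _
  have hBmeas : MeasurableSet B := PosiAux.Ev_measurable hVorfin _
  have hkey : P0 (A ∪ B) + P0 (A ∩ B) = P0 A + P0 B := measure_union_add_inter A hBmeas
  have h1 : ENNReal.ofReal (1 - ν) + ENNReal.ofReal (1 - (α - ν)) ≤ 1 + P0 (A ∩ B) :=
    calc ENNReal.ofReal (1 - ν) + ENNReal.ofReal (1 - (α - ν)) ≤ P0 A + P0 B :=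
          add_le_add hPA hPB
      _ = P0 (A ∪ B) + P0 (A ∩ B) := hkey.symm
      _ ≤ 1 + P0 (A ∩ B) := by gcongr; exact prob_le_one
  have h2 : ENNReal.ofReal (1 - ν) + ENNReal.ofReal (1 - (α - ν))
      = 1 + ENNReal.ofReal (1 - α) := by
    rw [← ENNReal.ofReal_add (by linarith) (by linarith), ← ENNReal.ofReal_one,
      ← ENNReal.ofReal_add zero_le_one (by linarith)]
    congr 1
    ring
  rw [h2] at h1
  have h3 : ENNReal.ofReal (1 - α) ≤ P0 (A ∩ B) :=
    (ENNReal.add_le_add_iff_left ENNReal.one_ne_top).mp h1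
  refine le_trans h3 (measure_mono ?_)
  -- the main inclusion
  rintro z ⟨hzA, hzB⟩
  simp only [Set.mem_setOf_eq]
  set M := Mhat (μ + z) with hM
  intro j
  have hXznorm : ‖Xᵀ *ᵥ z‖ ≤ q ν VX := by
    rw [pi_norm_le_iff_of_nonneg hqν0]
    intro j0
    rw [Real.norm_eq_abs]
    exact hzA _ ⟨j0, rfl⟩
  have hMmem : M ∈ Mor := by
    refine ⟨μ + z, ?_, rfl⟩
    have heq : Xᵀ *ᵥ μ - Xᵀ *ᵥ (μ + z) = -(Xᵀ *ᵥ z) := by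
      rw [Matrix.mulVec_add]
      abel
    rw [heq, norm_neg]
    exact hXznorm
  have hVsub : Vor ⊆ Vplus (μ + z) := by
    rw [hVplus, hMplus]
    rintro v ⟨M', ⟨y', hy', rfl⟩, j', rfl⟩
    refine ⟨Mhat y', ⟨y', ?_, rfl⟩, j', rfl⟩
    have heq : Xᵀ *ᵥ (μ + z) - Xᵀ *ᵥ y' = Xᵀ *ᵥ z + (Xᵀ *ᵥ μ - Xᵀ *ᵥ y') := by
      rw [Matrix.mulVec_add]
      abel
    rw [heq]
    calc ‖Xᵀ *ᵥ z + (Xᵀ *ᵥ μ - Xᵀ *ᵥ y')‖ ≤ ‖Xᵀ *ᵥ z‖ + ‖Xᵀ *ᵥ μ - Xᵀ *ᵥ y'‖ := norm_add_le _ _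
      _ ≤ q ν VX + q ν VX := add_le_add hXznorm hy'
      _ = sν := by rw [hsν]; ring
  have hqmono : q (α - ν) Vor ≤ q (α - ν) (Vplus (μ + z)) := by
    rw [hq', hq']
    refine PosiAux.q_mono P0 hVsub ?_ hβ0 hβ1
    refine hUfin.subset ?_
    rw [hVplus]
    rintro v ⟨M', _, j', rfl⟩
    exact mem_iUnion.2 ⟨M', ⟨j', rfl⟩⟩
  have hσ : 0 < sigmaHat X M j := sigmaHat_pos X M (hrank M) j
  have hzb := hzB _ (show (fun i => pinvSub X M j i / sigmaHat X M j) ∈ Vor from ⟨M, hMmem, j, rfl⟩)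
  have hdot : (fun i => pinvSub X M j i / sigmaHat X M j) ⬝ᵥ z
      = (pinvSub X M j ⬝ᵥ z) / sigmaHat X M j := by
    simp only [dotProduct, div_mul_eq_mul_div]
    rw [← Finset.sum_div]
  have hlhs : (pinvSub X M *ᵥ (μ + z)) j - (pinvSub X M *ᵥ μ) j = pinvSub X M j ⬝ᵥ z := by
    rw [Matrix.mulVec_add]
    simp only [Pi.add_apply]
    rw [add_sub_cancel_left]
    rfl
  rw [hlhs]
  rw [hdot, abs_div, abs_of_pos hσ] at hzb
  have hb := (div_le_iff₀ hσ).mp hzb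
  calc |pinvSub X M j ⬝ᵥ z| ≤ q (α - ν) Vor * sigmaHat X M j := hb
    _ ≤ q (α - ν) (Vplus (μ + z)) * sigmaHat X M j :=
        mul_le_mul_of_nonneg_right hqmono hσ.le
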